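/- Let f : ℝ_{>0} → ℝ be given by f(t) = tr((A^T (V + t·e e^T)^{-1} A)^{-1}) where A is a real m×3 full-column-rank matrix, V is diagonal with positive diagonal entries, and e is the all-ones vector. Then f(t) ≥ f(0) for all t ≥ 0, i.e., adding the rank-one term σ_0² e e^T to the noise covariance cannot decrease the CRLB trace. -/

import Mathlib

open Matrix

section Aux

variable {n : Type*} [Fintype n] [DecidableEq n]

private lemma psd_trace_nonneg {M : Matrix n n ℝ} (h : M.PosSemidef) : 0 ≤ M.trace := by
  rw [Matrix.trace]
  refine Finset.sum_nonneg fun i _ => ?_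
  have := h.dotProduct_mulVec_nonneg (Pi.single i 1)
  simpa [Matrix.mulVec_single, dotProduct, Pi.single_apply, Matrix.diag] using this

private lemma quad_eq {k : Type*} [Fintype k] (M : Matrix k n ℝ) (x : k → ℝ) (y : n → ℝ) :
    x ⬝ᵥ (M *ᵥ y) = (Mᵀ *ᵥ x) ⬝ᵥ y := by
  rw [Matrix.dotProduct_mulVec, Matrix.mulVec_transpose]

/-- Inverse is antitone on positive definite real matrices (Loewner order). -/
private lemma inv_antitone {M N : Matrix n n ℝ} (hM : M.PosDef) (hN : N.PosDef)
    (h : (N - M).PosSemidef) : (M⁻¹ - N⁻¹).PosSemidef := by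
  have hMinv := hM.inv
  have hNinv := hN.inv
  refine Matrix.PosSemidef.of_dotProduct_mulVec_nonneg (hMinv.isHermitian.sub hNinv.isHermitian) fun x => ?_
  set y : n → ℝ := N⁻¹ *ᵥ x with hy
  have hNN : N * N⁻¹ = 1 := Matrix.mul_nonsing_inv N (isUnit_iff_ne_zero.mpr hN.det_pos.ne')
  have hMM : M * M⁻¹ = 1 := Matrix.mul_nonsing_inv M (isUnit_iff_ne_zero.mpr hM.det_pos.ne')
  have hNy : N *ᵥ y = x := by
    rw [hy, Matrix.mulVec_mulVec, hNN, Matrix.one_mulVec]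
  set z : n → ℝ := y - M⁻¹ *ᵥ x with hz
  have hMsym : Mᵀ = M := by simpa using hM.isHermitian.eq
  -- fact 1 : 0 ≤ yᵀ(N-M)y
  have f1 : 0 ≤ y ⬝ᵥ ((N - M) *ᵥ y) := by simpa using h.dotProduct_mulVec_nonneg y
  -- fact 2 : 0 ≤ zᵀ M z
  have f2 : 0 ≤ z ⬝ᵥ (M *ᵥ z) := by simpa using hM.posSemidef.dotProduct_mulVec_nonneg z
  -- expand f1
  have e1 : y ⬝ᵥ ((N - M) *ᵥ y) = y ⬝ᵥ x - y ⬝ᵥ (M *ᵥ y) := by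
    rw [Matrix.sub_mulVec, dotProduct_sub, hNy]
  -- expand f2
  have eMx : (M⁻¹ *ᵥ x) ⬝ᵥ (M *ᵥ y) = x ⬝ᵥ y := by
    rw [quad_eq, hMsym, Matrix.mulVec_mulVec, hMM, Matrix.one_mulVec]
  have eMz : z ⬝ᵥ (M *ᵥ z) =
      y ⬝ᵥ (M *ᵥ y) - y ⬝ᵥ x - x ⬝ᵥ y + x ⬝ᵥ (M⁻¹ *ᵥ x) := by
    have hMMx : M *ᵥ (M⁻¹ *ᵥ x) = x := by
      rw [Matrix.mulVec_mulVec, hMM, Matrix.one_mulVec]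
    rw [hz, Matrix.mulVec_sub, sub_dotProduct, dotProduct_sub, dotProduct_sub, hMMx, eMx]
    rw [dotProduct_comm (M⁻¹ *ᵥ x) x]
    ring
  have hxy : x ⬝ᵥ y = y ⬝ᵥ x := dotProduct_comm _ _
  -- combine
  have goal' : x ⬝ᵥ (N⁻¹ *ᵥ x) ≤ x ⬝ᵥ (M⁻¹ *ᵥ x) := by
    have hxNx : x ⬝ᵥ (N⁻¹ *ᵥ x) = x ⬝ᵥ y := by rw [hy]
    rw [e1] at f1
    rw [eMz] at f2
    linarith
  have : x ⬝ᵥ ((M⁻¹ - N⁻¹) *ᵥ x) = x ⬝ᵥ (M⁻¹ *ᵥ x) - x ⬝ᵥ (N⁻¹ *ᵥ x) := by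
    rw [Matrix.sub_mulVec, dotProduct_sub]
  simpa [this] using sub_nonneg.mpr goal'

private lemma conj_psd {m : Type*} [Fintype m] [DecidableEq m] {P : Matrix m m ℝ} (hP : P.PosSemidef)
    (B : Matrix m n ℝ) : (Bᵀ * P * B).PosSemidef := by
  have : Bᵀ = Bᴴ := by ext i j; simp [Matrix.conjTranspose_apply]
  rw [this]
  exact hP.conjTranspose_mul_mul_same B

private lemma conj_pd {m : Type*} [Fintype m] [DecidableEq m] {P : Matrix m m ℝ} (hP : P.PosDef)
    (B : Matrix m n ℝ) (hB : Function.Injective B.mulVec) : (Bᵀ * P * B).PosDef := by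
  refine Matrix.PosDef.of_dotProduct_mulVec_pos (conj_psd hP.posSemidef B).isHermitian fun x hx => ?_
  have h1 : (Bᵀ * P * B) *ᵥ x = Bᵀ *ᵥ (P *ᵥ (B *ᵥ x)) := by
    rw [← Matrix.mulVec_mulVec, ← Matrix.mulVec_mulVec]
  have h2 : x ⬝ᵥ (Bᵀ *ᵥ (P *ᵥ (B *ᵥ x))) = (B *ᵥ x) ⬝ᵥ (P *ᵥ (B *ᵥ x)) := by
    rw [quad_eq Bᵀ x (P *ᵥ (B *ᵥ x)), Matrix.transpose_transpose]
  have hBx : B *ᵥ x ≠ 0 := by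
    intro hc
    exact hx (hB (by rw [hc, Matrix.mulVec_zero]))
  have := hP.dotProduct_mulVec_pos hBx
  simp only [star_trivial] at this ⊢
  rw [h1, h2]
  exact this

end Aux

private lemma rank_inj {m : ℕ} (A : Matrix (Fin m) (Fin 3) ℝ) (hA : A.rank = 3) :
    Function.Injective A.mulVec := by
  have hrn := LinearMap.finrank_range_add_finrank_ker A.mulVecLin
  rw [Matrix.rank] at hA
  have hdim : Module.finrank ℝ (Fin 3 → ℝ) = 3 := by simp
  rw [hdim, hA] at hrn
  have hker : Module.finrank ℝ (LinearMap.ker A.mulVecLin) = 0 := by omega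
  have : LinearMap.ker A.mulVecLin = ⊥ := Submodule.finrank_eq_zero.mp hker
  have hinj : Function.Injective A.mulVecLin := LinearMap.ker_eq_bot.mp this
  intro x y hxy
  exact hinj (by simpa [Matrix.mulVecLin_apply] using hxy)

/-- Adding the rank-one term `t·eeᵀ` (`t ≥ 0`) to the diagonal noise covariance cannot
decrease the CRLB trace: `tr((Aᵀ(V + t eeᵀ)⁻¹A)⁻¹) ≥ tr((Aᵀ V⁻¹ A)⁻¹)`. -/
theorem stmt_12 (m : ℕ) (hm : 3 ≤ m) (A : Matrix (Fin m) (Fin 3) ℝ) (hA : A.rank = 3)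
    (d : Fin m → ℝ) (hd : ∀ i, 0 < d i) (t : ℝ) (ht : 0 ≤ t) :
    ((Aᵀ * (Matrix.diagonal d)⁻¹ * A)⁻¹).trace ≤
      ((Aᵀ * (Matrix.diagonal d + t • (Matrix.of fun _ _ : Fin m => (1 : ℝ)))⁻¹ * A)⁻¹).trace := by
  set V : Matrix (Fin m) (Fin m) ℝ := Matrix.diagonal d with hVdef
  set E : Matrix (Fin m) (Fin m) ℝ := Matrix.of fun _ _ => (1 : ℝ) with hEdef
  have hV : V.PosDef := Matrix.PosDef.diagonal hd
  have hE : (t • E).PosSemidef := by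
    refine Matrix.PosSemidef.of_dotProduct_mulVec_nonneg ?_ fun x => ?_
    · refine Matrix.IsHermitian.ext fun i j => by simp [hEdef, Matrix.conjTranspose_apply]
    · have hEx : E *ᵥ x = fun _ => ∑ j, x j := by
        ext i; simp [hEdef, Matrix.mulVec, dotProduct]
      have : x ⬝ᵥ ((t • E) *ᵥ x) = t * ((∑ j, x j) * (∑ j, x j)) := by
        rw [Matrix.smul_mulVec, dotProduct_smul, hEx]
        simp [dotProduct, ← Finset.sum_mul]
      simp only [star_trivial]
      rw [this]
      exact mul_nonneg ht (mul_self_nonneg _)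
  set W : Matrix (Fin m) (Fin m) ℝ := V + t • E with hWdef
  have hW : W.PosDef := hV.add_posSemidef hE
  have hsub : (W - V).PosSemidef := by
    have : W - V = t • E := by rw [hWdef, add_sub_cancel_left]
    rw [this]; exact hE
  have hinv1 : (V⁻¹ - W⁻¹).PosSemidef := inv_antitone hV hW hsub
  have hinj := rank_inj A hA
  have hMpd : (Aᵀ * V⁻¹ * A).PosDef := conj_pd hV.inv A hinj
  have hNpd : (Aᵀ * W⁻¹ * A).PosDef := conj_pd hW.inv A hinj
  have hconj : (Aᵀ * V⁻¹ * A - Aᵀ * W⁻¹ * A).PosSemidef := by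
    have : Aᵀ * V⁻¹ * A - Aᵀ * W⁻¹ * A = Aᵀ * (V⁻¹ - W⁻¹) * A := by
      rw [Matrix.mul_sub, Matrix.sub_mul]
    rw [this]
    exact conj_psd hinv1 A
  have hfinal : ((Aᵀ * W⁻¹ * A)⁻¹ - (Aᵀ * V⁻¹ * A)⁻¹).PosSemidef :=
    inv_antitone hNpd hMpd hconj
  have htr := psd_trace_nonneg hfinal
  rw [Matrix.trace_sub] at htr
  linarith
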